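/- Let q be a prime power with q - 1 = 4k + R for some R ∈ {1,...,5} and k ≥ 1. Then there exists a [k, q; 5]-mixed graph on 2q² - 2 vertices; consequently, the minimum order n[k,q;5] of a [k,q;5]-mixed cage satisfies n[k,q;5] ≤ 2q² - 2. -/

import Mathlib

/-- A mixed cycle of length `ℓ` in a mixed graph with edge relation `E` and arc relation
`A`: an injective cyclic sequence of vertices where each step is an arc (traversed
forwards) or an edge; a closed walk of length 2 reusing one edge is not a cycle. -/
def IsMixedCycleIn {V : Type} (E A : V → V → Prop) (ℓ : ℕ) (f : ZMod ℓ → V) : Prop :=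
  Function.Injective f ∧
    ∃ s : ZMod ℓ → Bool,
      (∀ t : ZMod ℓ, if s t then A (f t) (f (t + 1)) else E (f t) (f (t + 1))) ∧
      (ℓ = 2 → s 0 = true ∨ s 1 = true)

/-- `n ∈ MixedGraphOrders z r g` iff there is a `[z,r;g]`-mixed graph on `n` vertices:
a simple mixed graph in which every vertex has `r` incident edges, `z` out-arcs and
`z` in-arcs, every mixed cycle has length at least `g`, and some mixed cycle has
length `g`. -/
def MixedGraphOrders (z r g : ℕ) : Set ℕ :=
  {n | ∃ E A : Fin n → Fin n → Prop,
    (∀ u v, E u v → E v u) ∧ (∀ v, ¬ E v v) ∧ (∀ v, ¬ A v v) ∧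
    (∀ u v, ¬ (E u v ∧ A u v)) ∧
    (∀ v, Nat.card {w : Fin n // E v w} = r) ∧
    (∀ v, Nat.card {w : Fin n // A v w} = z) ∧
    (∀ v, Nat.card {w : Fin n // A w v} = z) ∧
    (∀ (ℓ : ℕ) (f : ZMod ℓ → Fin n), IsMixedCycleIn E A ℓ f → g ≤ ℓ) ∧
    (∃ f : ZMod g → Fin n, IsMixedCycleIn E A g f)}

set_option linter.unusedSectionVars false
set_option maxHeartbeats 1000000

namespace MixedCage


variable {F : Type} [Field F] [Fintype F]

def cc : Option F → Option F → F
  | some d, some m => d - m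
  | some _, none => 1
  | none, some _ => 1
  | none, none => 0

lemma cc_eq_zero : ∀ {d m : Option F}, cc d m = 0 ↔ d = m := by
  rintro (_|d) (_|m) <;> simp [cc, sub_eq_zero]

abbrev X (F : Type) [Field F] : Type := Option F × Fˣ
abbrev V (F : Type) [Field F] : Type := X F ⊕ X F

def Ea (a b : X F) : Prop := (b.2 : F) = (a.2 : F) * cc a.1 b.1

def Ar (g : Fˣ) (k : ℕ) (a b : X F) : Prop :=
  b.1 = a.1 ∧ ∃ j, 1 ≤ j ∧ j ≤ k ∧ b.2 = g ^ j * a.2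

def Eg : V F → V F → Prop
  | .inl a, .inr b => Ea a b
  | .inr b, .inl a => Ea a b
  | _, _ => False

def Ag (g : Fˣ) (k : ℕ) : V F → V F → Prop
  | .inl a, .inl b => Ar g k a b
  | .inr a, .inr b => Ar g k a b
  | _, _ => False

section basic

variable {g : Fˣ} {k : ℕ}

lemma Ea_cc_ne {a b : X F} (h : Ea a b) : cc a.1 b.1 ≠ 0 := by
  intro h0
  exact b.2.ne_zero (by rw [h, h0, mul_zero])

lemma pow_ne (hk4 : 4 * k < orderOf g) {J : ℕ} (h1 : 1 ≤ J) (h4 : J ≤ 4 * k) :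
    g ^ J ≠ 1 := by
  intro h
  have h2 := Nat.le_of_dvd (by omega) (orderOf_dvd_of_pow_eq_one h)
  omega

lemma M0 (hk4 : 4 * k < orderOf g) {t : Fˣ} {J : ℕ} (h1 : 1 ≤ J) (h4 : J ≤ 4 * k)
    (hrel : (t : F) = (g : F) ^ J * t) : False := by
  apply pow_ne hk4 h1 h4
  have ht : (t : F) ≠ 0 := t.ne_zero
  have hgJ : (g : F) ^ J = 1 := by
    apply mul_right_cancel₀ ht
    rw [one_mul]
    linear_combination -hrel
  exact Units.ext (by rw [Units.val_pow_eq_pow_val, Units.val_one]; exact hgJ)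

lemma M1 (hk4 : 4 * k < orderOf g) {p L p' L' : X F} {J : ℕ}
    (h1 : Ea p L) (h2 : Ea p' L') (hp : p'.1 = p.1) (hL : L'.1 = L.1)
    (hJ1 : 1 ≤ J) (hJ4 : J ≤ 4 * k)
    (hrel : (p.2 : F) * L'.2 = (g : F) ^ J * ((p'.2 : F) * L.2)) : False := by
  have hc : cc p.1 L.1 ≠ 0 := Ea_cc_ne h1
  unfold Ea at h1 h2
  rw [hp, hL] at h2
  apply pow_ne hk4 hJ1 hJ4
  have h0 : ((p.2 : F) * p'.2 * cc p.1 L.1) ≠ 0 :=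
    mul_ne_zero (mul_ne_zero p.2.ne_zero p'.2.ne_zero) hc
  have hgJ : (g : F) ^ J = 1 := by
    apply mul_right_cancel₀ h0
    rw [one_mul]
    linear_combination (-1 : F) * hrel + (p.2 : F) * h2 - (g : F) ^ J * (p'.2 : F) * h1
  exact Units.ext (by rw [Units.val_pow_eq_pow_val, Units.val_one]; exact hgJ)

lemma Ea_cancel_left {p p' L : X F} (h1 : Ea p L) (h2 : Ea p' L) (hd : p.1 = p'.1) :
    p = p' := by
  have hc : cc p.1 L.1 ≠ 0 := Ea_cc_ne h1
  unfold Ea at h1 h2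
  rw [← hd] at h2
  refine Prod.ext hd (Units.ext ?_)
  exact mul_right_cancel₀ hc (h1.symm.trans h2)

lemma Ea_cancel_right {p L L' : X F} (h1 : Ea p L) (h2 : Ea p L') (hm : L.1 = L'.1) :
    L = L' := by
  unfold Ea at h1 h2
  rw [← hm] at h2
  exact Prod.ext hm (Units.ext (h1.trans h2.symm))

lemma cross {d d' m m' : Option F} (h1 : cc d m ≠ 0) (h2 : cc d' m ≠ 0)
    (h3 : cc d m' ≠ 0) (h4 : cc d' m' ≠ 0)
    (h : cc d m * cc d' m' = cc d' m * cc d m') : d = d' ∨ m = m' := by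
  rcases d with _|d <;> rcases d' with _|d' <;> rcases m with _|m <;> rcases m' with _|m' <;>
    simp only [cc, Option.some.injEq, one_mul, mul_one, ne_eq, not_true_eq_false,
      not_false_iff, reduceCtorEq, false_or, or_false] at h1 h2 h3 h4 h ⊢
  all_goals try tauto
  all_goals try first
    | exact sub_right_inj.mp h
    | exact (sub_right_inj.mp h).symm
    | exact sub_left_inj.mp h
    | exact (sub_left_inj.mp h).symm
  have h0 : (d - d') * (m - m') = 0 := by linear_combination h
  rcases mul_eq_zero.mp h0 with h0 | h0
  · exact Or.inl (sub_eq_zero.mp h0)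
  · exact Or.inr (sub_eq_zero.mp h0)

lemma quad {p p' L L' : X F} (h1 : Ea p L) (h2 : Ea p' L) (h3 : Ea p L') (h4 : Ea p' L') :
    p = p' ∨ L = L' := by
  have c1 := Ea_cc_ne h1
  have c2 := Ea_cc_ne h2
  have c3 := Ea_cc_ne h3
  have c4 := Ea_cc_ne h4
  have key : cc p.1 L.1 * cc p'.1 L'.1 = cc p'.1 L.1 * cc p.1 L'.1 := by
    have hp : (p.2 : F) ≠ 0 := p.2.ne_zero
    have hp' : (p'.2 : F) ≠ 0 := p'.2.ne_zero
    apply mul_left_cancel₀ (mul_ne_zero hp hp')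
    unfold Ea at h1 h2 h3 h4
    linear_combination (L.2 : F) * h3 + (p.2 : F) * cc p.1 L'.1 * h2 -
      (L.2 : F) * h4 - (p'.2 : F) * cc p'.1 L'.1 * h1
  rcases cross c1 c2 c3 c4 key with hd | hm
  · exact Or.inl (Ea_cancel_left h1 h2 hd)
  · exact Or.inr (Ea_cancel_right h1 h3 hm)

lemma A_inl {a : X F} {w : V F} (h : Ag g k (.inl a) w) : ∃ b, w = .inl b ∧ Ar g k a b := by
  cases w with
  | inl b => exact ⟨b, rfl, h⟩
  | inr b => exact h.elim

lemma A_inr {a : X F} {w : V F} (h : Ag g k (.inr a) w) : ∃ b, w = .inr b ∧ Ar g k a b := by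
  cases w with
  | inl b => exact h.elim
  | inr b => exact ⟨b, rfl, h⟩

lemma E_inl {a : X F} {w : V F} (h : Eg (.inl a) w) : ∃ b, w = .inr b ∧ Ea a b := by
  cases w with
  | inl b => exact h.elim
  | inr b => exact ⟨b, rfl, h⟩

lemma E_inr {b : X F} {w : V F} (h : Eg (.inr b) w) : ∃ a, w = .inl a ∧ Ea a b := by
  cases w with
  | inl a => exact ⟨a, rfl, h⟩
  | inr a => exact h.elim

lemma Ar_spec {a b : X F} (h : Ar g k a b) :
    b.1 = a.1 ∧ ∃ j, 1 ≤ j ∧ j ≤ k ∧ (b.2 : F) = (g : F) ^ j * (a.2 : F) := by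
  obtain ⟨h1, j, hj1, hjk, h2⟩ := h
  exact ⟨h1, j, hj1, hjk, by rw [h2]; simp⟩


def sd : V F → Bool := Sum.elim (fun _ => false) (fun _ => true)

lemma A_sd {v w : V F} (h : Ag g k v w) : sd w = sd v := by
  cases v <;> cases w <;> first | rfl | exact h.elim

lemma E_sd {v w : V F} (h : Eg v w) : sd w = !sd v := by
  cases v <;> cases w <;> first | rfl | exact h.elim

lemma step_or {c : Bool} {P Q : Prop} (h : if c then P else Q) : P ∨ Q := by
  cases c
  · exact Or.inr h
  · exact Or.inl h

lemma EA_disj {v w : V F} (h : Eg v w) (h' : Ag g k v w) : False := by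
  cases v <;> cases w
  · exact h
  · exact h'
  · exact h'
  · exact h

lemma no1 (hk4 : 4 * k < orderOf g) {f : ZMod 1 → V F}
    (hc : IsMixedCycleIn Eg (Ag g k) 1 f) : False := by
  obtain ⟨hinj, s, hs, -⟩ := hc
  have h0' := hs 0
  rw [show ((0 : ZMod 1) + 1) = 0 by decide] at h0'
  rcases step_or h0' with h0 | h0
  · rcases hf0 : f 0 with a0 | a0 <;> rw [hf0] at h0
    · have r : Ar g k a0 a0 := h0
      obtain ⟨-, j, hj1, hjk, e⟩ := Ar_spec r
      exact M0 hk4 hj1 (by omega) e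
    · have r : Ar g k a0 a0 := h0
      obtain ⟨-, j, hj1, hjk, e⟩ := Ar_spec r
      exact M0 hk4 hj1 (by omega) e
  · rcases hf0 : f 0 with a0 | a0 <;> rw [hf0] at h0 <;> exact h0


lemma no2 (hk4 : 4 * k < orderOf g) {f : ZMod 2 → V F}
    (hc : IsMixedCycleIn Eg (Ag g k) 2 f) : False := by
  obtain ⟨hinj, s, hs, h2c⟩ := hc
  have hcond := h2c rfl
  have h0' := hs 0
  have h1' := hs 1
  rw [show ((0 : ZMod 2) + 1) = 1 by decide] at h0'
  rw [show ((1 : ZMod 2) + 1) = 0 by decide] at h1'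
  rcases step_or h0' with h0 | h0 <;> rcases step_or h1' with h1 | h1
  · -- both arcs
    rcases hf0 : f 0 with a0 | a0 <;> rw [hf0] at h0 h1
    · obtain ⟨a1, hf1, r0⟩ := A_inl h0
      rw [hf1] at h1
      have r1 : Ar g k a1 a0 := h1
      obtain ⟨-, j0, hj0, hj0k, e0⟩ := Ar_spec r0
      obtain ⟨-, j1, hj1, hj1k, e1⟩ := Ar_spec r1
      exact M0 hk4 (t := a0.2) (J := j1 + j0) (by omega) (by omega)
        (by linear_combination e1 + (g : F) ^ j1 * e0)
    · obtain ⟨a1, hf1, r0⟩ := A_inr h0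
      rw [hf1] at h1
      have r1 : Ar g k a1 a0 := h1
      obtain ⟨-, j0, hj0, hj0k, e0⟩ := Ar_spec r0
      obtain ⟨-, j1, hj1, hj1k, e1⟩ := Ar_spec r1
      exact M0 hk4 (t := a0.2) (J := j1 + j0) (by omega) (by omega)
        (by linear_combination e1 + (g : F) ^ j1 * e0)
  · have h0s := A_sd h0
    have h1s := E_sd h1
    rw [h0s] at h1s
    simp at h1s
  · have h0s := E_sd h0
    have h1s := A_sd h1
    rw [h0s] at h1s
    simp at h1s
  · -- both edges: excluded by the length-2 condition
    rcases hcond with hb | hb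
    · rw [hb, if_pos rfl] at h0'
      exact EA_disj h0 h0'
    · rw [hb, if_pos rfl] at h1'
      exact EA_disj h1 h1'


lemma no3 (hk4 : 4 * k < orderOf g) {f : ZMod 3 → V F}
    (hc : IsMixedCycleIn Eg (Ag g k) 3 f) : False := by
  obtain ⟨hinj, s, hs, -⟩ := hc
  have h0' := hs 0
  have h1' := hs 1
  have h2' := hs 2
  rw [show ((0 : ZMod 3) + 1) = 1 by decide] at h0'
  rw [show ((1 : ZMod 3) + 1) = 2 by decide] at h1'
  rw [show ((2 : ZMod 3) + 1) = 0 by decide] at h2'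
  rcases step_or h0' with h0 | h0 <;> rcases step_or h1' with h1 | h1 <;>
    rcases step_or h2' with h2 | h2
  all_goals try {
    first
      | have h2s := A_sd h2 | have h2s := E_sd h2
    first
      | rw [A_sd h1] at h2s | rw [E_sd h1] at h2s
    first
      | rw [A_sd h0] at h2s | rw [E_sd h0] at h2s
    simp at h2s }
  -- AAA
  · rcases hf0 : f 0 with a0 | a0 <;> rw [hf0] at h0 h2
    · obtain ⟨a1, hf1, r0⟩ := A_inl h0
      rw [hf1] at h1
      obtain ⟨a2, hf2, r1⟩ := A_inl h1
      rw [hf2] at h2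
      have r2 : Ar g k a2 a0 := h2
      obtain ⟨-, j0, hj0, hj0k, e0⟩ := Ar_spec r0
      obtain ⟨-, j1, hj1, hj1k, e1⟩ := Ar_spec r1
      obtain ⟨-, j2, hj2, hj2k, e2⟩ := Ar_spec r2
      exact M0 hk4 (t := a0.2) (J := j2 + j1 + j0) (by omega) (by omega)
        (by linear_combination e2 + (g : F) ^ j2 * e1 + (g : F) ^ (j2 + j1) * e0)
    · obtain ⟨a1, hf1, r0⟩ := A_inr h0
      rw [hf1] at h1
      obtain ⟨a2, hf2, r1⟩ := A_inr h1
      rw [hf2] at h2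
      have r2 : Ar g k a2 a0 := h2
      obtain ⟨-, j0, hj0, hj0k, e0⟩ := Ar_spec r0
      obtain ⟨-, j1, hj1, hj1k, e1⟩ := Ar_spec r1
      obtain ⟨-, j2, hj2, hj2k, e2⟩ := Ar_spec r2
      exact M0 hk4 (t := a0.2) (J := j2 + j1 + j0) (by omega) (by omega)
        (by linear_combination e2 + (g : F) ^ j2 * e1 + (g : F) ^ (j2 + j1) * e0)
  -- AEE
  · rcases hf0 : f 0 with a0 | a0 <;> rw [hf0] at h0 h2
    · obtain ⟨a1, hf1, r0⟩ := A_inl h0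
      rw [hf1] at h1
      obtain ⟨a2, hf2, e1⟩ := E_inl h1
      rw [hf2] at h2
      have e2 : Ea a0 a2 := h2
      have h01 := Ea_cancel_left e1 e2 r0.1
      obtain ⟨-, j0, hj0, hj0k, e0⟩ := Ar_spec r0
      rw [h01] at e0
      exact M0 hk4 (t := a0.2) (J := j0) hj0 (by omega) e0
    · obtain ⟨a1, hf1, r0⟩ := A_inr h0
      rw [hf1] at h1
      obtain ⟨a2, hf2, e1⟩ := E_inr h1
      rw [hf2] at h2
      have e2 : Ea a2 a0 := h2
      have h01 := Ea_cancel_right e1 e2 r0.1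
      obtain ⟨-, j0, hj0, hj0k, e0⟩ := Ar_spec r0
      rw [h01] at e0
      exact M0 hk4 (t := a0.2) (J := j0) hj0 (by omega) e0
  -- EAE
  · rcases hf0 : f 0 with a0 | a0 <;> rw [hf0] at h0 h2
    · obtain ⟨a1, hf1, e0⟩ := E_inl h0
      rw [hf1] at h1
      obtain ⟨a2, hf2, r1⟩ := A_inr h1
      rw [hf2] at h2
      have e2 : Ea a0 a2 := h2
      have h12 := Ea_cancel_right e0 e2 r1.1.symm
      obtain ⟨-, j1, hj1, hj1k, e1⟩ := Ar_spec r1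
      rw [← h12] at e1
      exact M0 hk4 (t := a1.2) (J := j1) hj1 (by omega) e1
    · obtain ⟨a1, hf1, e0⟩ := E_inr h0
      rw [hf1] at h1
      obtain ⟨a2, hf2, r1⟩ := A_inl h1
      rw [hf2] at h2
      have e2 : Ea a2 a0 := h2
      have h12 := Ea_cancel_left e0 e2 r1.1.symm
      obtain ⟨-, j1, hj1, hj1k, e1⟩ := Ar_spec r1
      rw [← h12] at e1
      exact M0 hk4 (t := a1.2) (J := j1) hj1 (by omega) e1
  -- EEA
  · rcases hf0 : f 0 with a0 | a0 <;> rw [hf0] at h0 h2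
    · obtain ⟨a1, hf1, e0⟩ := E_inl h0
      rw [hf1] at h1
      obtain ⟨a2, hf2, e1⟩ := E_inr h1
      rw [hf2] at h2
      have r2 : Ar g k a2 a0 := h2
      have h02 := Ea_cancel_left e0 e1 r2.1
      obtain ⟨-, j2, hj2, hj2k, e2⟩ := Ar_spec r2
      rw [← h02] at e2
      exact M0 hk4 (t := a0.2) (J := j2) hj2 (by omega) e2
    · obtain ⟨a1, hf1, e0⟩ := E_inr h0
      rw [hf1] at h1
      obtain ⟨a2, hf2, e1⟩ := E_inl h1
      rw [hf2] at h2
      have r2 : Ar g k a2 a0 := h2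
      have h02 := Ea_cancel_right e0 e1 r2.1
      obtain ⟨-, j2, hj2, hj2k, e2⟩ := Ar_spec r2
      rw [← h02] at e2
      exact M0 hk4 (t := a0.2) (J := j2) hj2 (by omega) e2


lemma no4 (hk4 : 4 * k < orderOf g) {f : ZMod 4 → V F}
    (hc : IsMixedCycleIn Eg (Ag g k) 4 f) : False := by
  obtain ⟨hinj, s, hs, -⟩ := hc
  have h0' := hs 0
  have h1' := hs 1
  have h2' := hs 2
  have h3' := hs 3
  rw [show ((0 : ZMod 4) + 1) = 1 by decide] at h0'
  rw [show ((1 : ZMod 4) + 1) = 2 by decide] at h1'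
  rw [show ((2 : ZMod 4) + 1) = 3 by decide] at h2'
  rw [show ((3 : ZMod 4) + 1) = 0 by decide] at h3'
  rcases step_or h0' with h0 | h0 <;> rcases step_or h1' with h1 | h1 <;>
    rcases step_or h2' with h2 | h2 <;> rcases step_or h3' with h3 | h3
  all_goals try {
    first | have hps := A_sd h3 | have hps := E_sd h3
    first | rw [A_sd h2] at hps | rw [E_sd h2] at hps
    first | rw [A_sd h1] at hps | rw [E_sd h1] at hps
    first | rw [A_sd h0] at hps | rw [E_sd h0] at hps
    simp at hps }
  -- AAAA
  · rcases hf0 : f 0 with a0 | a0 <;> rw [hf0] at h0 h3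
    · obtain ⟨a1, hf1, r0⟩ := A_inl h0
      rw [hf1] at h1
      obtain ⟨a2, hf2, r1⟩ := A_inl h1
      rw [hf2] at h2
      obtain ⟨a3, hf3, r2⟩ := A_inl h2
      rw [hf3] at h3
      have r3 : Ar g k a3 a0 := h3
      obtain ⟨-, j0, hj0, hj0k, e0⟩ := Ar_spec r0
      obtain ⟨-, j1, hj1, hj1k, e1⟩ := Ar_spec r1
      obtain ⟨-, j2, hj2, hj2k, e2⟩ := Ar_spec r2
      obtain ⟨-, j3, hj3, hj3k, e3⟩ := Ar_spec r3
      exact M0 hk4 (t := a0.2) (J := j3 + j2 + j1 + j0) (by omega) (by omega)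
        (by linear_combination e3 + (g : F) ^ j3 * e2 + (g : F) ^ (j3 + j2) * e1 +
          (g : F) ^ (j3 + j2 + j1) * e0)
    · obtain ⟨a1, hf1, r0⟩ := A_inr h0
      rw [hf1] at h1
      obtain ⟨a2, hf2, r1⟩ := A_inr h1
      rw [hf2] at h2
      obtain ⟨a3, hf3, r2⟩ := A_inr h2
      rw [hf3] at h3
      have r3 : Ar g k a3 a0 := h3
      obtain ⟨-, j0, hj0, hj0k, e0⟩ := Ar_spec r0
      obtain ⟨-, j1, hj1, hj1k, e1⟩ := Ar_spec r1
      obtain ⟨-, j2, hj2, hj2k, e2⟩ := Ar_spec r2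
      obtain ⟨-, j3, hj3, hj3k, e3⟩ := Ar_spec r3
      exact M0 hk4 (t := a0.2) (J := j3 + j2 + j1 + j0) (by omega) (by omega)
        (by linear_combination e3 + (g : F) ^ j3 * e2 + (g : F) ^ (j3 + j2) * e1 +
          (g : F) ^ (j3 + j2 + j1) * e0)
  -- AAEE
  · rcases hf0 : f 0 with a0 | a0 <;> rw [hf0] at h0 h3
    · obtain ⟨a1, hf1, r0⟩ := A_inl h0
      rw [hf1] at h1
      obtain ⟨a2, hf2, r1⟩ := A_inl h1
      rw [hf2] at h2
      obtain ⟨a3, hf3, e2⟩ := E_inl h2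
      rw [hf3] at h3
      have e3 : Ea a0 a3 := h3
      have h02 := Ea_cancel_left e2 e3 (r1.1.trans r0.1)
      obtain ⟨-, j0, hj0, hj0k, e0⟩ := Ar_spec r0
      obtain ⟨-, j1, hj1, hj1k, e1⟩ := Ar_spec r1
      rw [h02] at e1
      exact M0 hk4 (t := a0.2) (J := j1 + j0) (by omega) (by omega)
        (by linear_combination e1 + (g : F) ^ j1 * e0)
    · obtain ⟨a1, hf1, r0⟩ := A_inr h0
      rw [hf1] at h1
      obtain ⟨a2, hf2, r1⟩ := A_inr h1
      rw [hf2] at h2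
      obtain ⟨a3, hf3, e2⟩ := E_inr h2
      rw [hf3] at h3
      have e3 : Ea a3 a0 := h3
      have h02 := Ea_cancel_right e2 e3 (r1.1.trans r0.1)
      obtain ⟨-, j0, hj0, hj0k, e0⟩ := Ar_spec r0
      obtain ⟨-, j1, hj1, hj1k, e1⟩ := Ar_spec r1
      rw [h02] at e1
      exact M0 hk4 (t := a0.2) (J := j1 + j0) (by omega) (by omega)
        (by linear_combination e1 + (g : F) ^ j1 * e0)
  -- AEAE
  · rcases hf0 : f 0 with a0 | a0 <;> rw [hf0] at h0 h3
    · obtain ⟨a1, hf1, r0⟩ := A_inl h0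
      rw [hf1] at h1
      obtain ⟨a2, hf2, e1⟩ := E_inl h1
      rw [hf2] at h2
      obtain ⟨a3, hf3, r2⟩ := A_inr h2
      rw [hf3] at h3
      have e3 : Ea a0 a3 := h3
      obtain ⟨-, j0, hj0, hj0k, e0⟩ := Ar_spec r0
      obtain ⟨-, j2, hj2, hj2k, e2⟩ := Ar_spec r2
      exact M1 hk4 e1 e3 r0.1.symm r2.1 (J := j0 + j2) (by omega) (by omega)
        (by linear_combination (a3.2 : F) * e0 + (g : F) ^ j0 * (a0.2 : F) * e2)
    · obtain ⟨a1, hf1, r0⟩ := A_inr h0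
      rw [hf1] at h1
      obtain ⟨a2, hf2, e1⟩ := E_inr h1
      rw [hf2] at h2
      obtain ⟨a3, hf3, r2⟩ := A_inl h2
      rw [hf3] at h3
      have e3 : Ea a3 a0 := h3
      obtain ⟨-, j0, hj0, hj0k, e0⟩ := Ar_spec r0
      obtain ⟨-, j2, hj2, hj2k, e2⟩ := Ar_spec r2
      exact M1 hk4 e3 e1 r2.1.symm r0.1 (J := j2 + j0) (by omega) (by omega)
        (by linear_combination (a1.2 : F) * e2 + (g : F) ^ j2 * (a2.2 : F) * e0)
  -- AEEA
  · rcases hf0 : f 0 with a0 | a0 <;> rw [hf0] at h0 h3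
    · obtain ⟨a1, hf1, r0⟩ := A_inl h0
      rw [hf1] at h1
      obtain ⟨a2, hf2, e1⟩ := E_inl h1
      rw [hf2] at h2
      obtain ⟨a3, hf3, e2⟩ := E_inr h2
      rw [hf3] at h3
      have r3 : Ar g k a3 a0 := h3
      have h13 := Ea_cancel_left e1 e2 (r0.1.trans r3.1)
      obtain ⟨-, j0, hj0, hj0k, e0⟩ := Ar_spec r0
      obtain ⟨-, j3, hj3, hj3k, e3⟩ := Ar_spec r3
      rw [← h13] at e3
      exact M0 hk4 (t := a0.2) (J := j3 + j0) (by omega) (by omega)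
        (by linear_combination e3 + (g : F) ^ j3 * e0)
    · obtain ⟨a1, hf1, r0⟩ := A_inr h0
      rw [hf1] at h1
      obtain ⟨a2, hf2, e1⟩ := E_inr h1
      rw [hf2] at h2
      obtain ⟨a3, hf3, e2⟩ := E_inl h2
      rw [hf3] at h3
      have r3 : Ar g k a3 a0 := h3
      have h13 := Ea_cancel_right e1 e2 (r0.1.trans r3.1)
      obtain ⟨-, j0, hj0, hj0k, e0⟩ := Ar_spec r0
      obtain ⟨-, j3, hj3, hj3k, e3⟩ := Ar_spec r3
      rw [← h13] at e3
      exact M0 hk4 (t := a0.2) (J := j3 + j0) (by omega) (by omega)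
        (by linear_combination e3 + (g : F) ^ j3 * e0)
  -- EAAE
  · rcases hf0 : f 0 with a0 | a0 <;> rw [hf0] at h0 h3
    · obtain ⟨a1, hf1, e0⟩ := E_inl h0
      rw [hf1] at h1
      obtain ⟨a2, hf2, r1⟩ := A_inr h1
      rw [hf2] at h2
      obtain ⟨a3, hf3, r2⟩ := A_inr h2
      rw [hf3] at h3
      have e3 : Ea a0 a3 := h3
      have h13 := Ea_cancel_right e0 e3 (r2.1.trans r1.1).symm
      obtain ⟨-, j1, hj1, hj1k, e1⟩ := Ar_spec r1
      obtain ⟨-, j2, hj2, hj2k, e2⟩ := Ar_spec r2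
      rw [← h13] at e2
      exact M0 hk4 (t := a1.2) (J := j2 + j1) (by omega) (by omega)
        (by linear_combination e2 + (g : F) ^ j2 * e1)
    · obtain ⟨a1, hf1, e0⟩ := E_inr h0
      rw [hf1] at h1
      obtain ⟨a2, hf2, r1⟩ := A_inl h1
      rw [hf2] at h2
      obtain ⟨a3, hf3, r2⟩ := A_inl h2
      rw [hf3] at h3
      have e3 : Ea a3 a0 := h3
      have h13 := Ea_cancel_left e0 e3 (r2.1.trans r1.1).symm
      obtain ⟨-, j1, hj1, hj1k, e1⟩ := Ar_spec r1
      obtain ⟨-, j2, hj2, hj2k, e2⟩ := Ar_spec r2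
      rw [← h13] at e2
      exact M0 hk4 (t := a1.2) (J := j2 + j1) (by omega) (by omega)
        (by linear_combination e2 + (g : F) ^ j2 * e1)
  -- EAEA
  · rcases hf0 : f 0 with a0 | a0 <;> rw [hf0] at h0 h3
    · obtain ⟨a1, hf1, e0⟩ := E_inl h0
      rw [hf1] at h1
      obtain ⟨a2, hf2, r1⟩ := A_inr h1
      rw [hf2] at h2
      obtain ⟨a3, hf3, e2⟩ := E_inr h2
      rw [hf3] at h3
      have r3 : Ar g k a3 a0 := h3
      obtain ⟨-, j1, hj1, hj1k, e1⟩ := Ar_spec r1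
      obtain ⟨-, j3, hj3, hj3k, e3⟩ := Ar_spec r3
      exact M1 hk4 e0 e2 r3.1.symm r1.1 (J := j3 + j1) (by omega) (by omega)
        (by linear_combination (a2.2 : F) * e3 + (g : F) ^ j3 * (a3.2 : F) * e1)
    · obtain ⟨a1, hf1, e0⟩ := E_inr h0
      rw [hf1] at h1
      obtain ⟨a2, hf2, r1⟩ := A_inl h1
      rw [hf2] at h2
      obtain ⟨a3, hf3, e2⟩ := E_inl h2
      rw [hf3] at h3
      have r3 : Ar g k a3 a0 := h3
      obtain ⟨-, j1, hj1, hj1k, e1⟩ := Ar_spec r1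
      obtain ⟨-, j3, hj3, hj3k, e3⟩ := Ar_spec r3
      exact M1 hk4 e2 e0 r1.1.symm r3.1 (J := j1 + j3) (by omega) (by omega)
        (by linear_combination (a0.2 : F) * e1 + (g : F) ^ j1 * (a1.2 : F) * e3)
  -- EEAA
  · rcases hf0 : f 0 with a0 | a0 <;> rw [hf0] at h0 h3
    · obtain ⟨a1, hf1, e0⟩ := E_inl h0
      rw [hf1] at h1
      obtain ⟨a2, hf2, e1⟩ := E_inr h1
      rw [hf2] at h2
      obtain ⟨a3, hf3, r2⟩ := A_inl h2
      rw [hf3] at h3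
      have r3 : Ar g k a3 a0 := h3
      have h02 := Ea_cancel_left e0 e1 (r3.1.trans r2.1)
      obtain ⟨-, j2, hj2, hj2k, e2⟩ := Ar_spec r2
      obtain ⟨-, j3, hj3, hj3k, e3⟩ := Ar_spec r3
      rw [← h02] at e2
      exact M0 hk4 (t := a0.2) (J := j3 + j2) (by omega) (by omega)
        (by linear_combination e3 + (g : F) ^ j3 * e2)
    · obtain ⟨a1, hf1, e0⟩ := E_inr h0
      rw [hf1] at h1
      obtain ⟨a2, hf2, e1⟩ := E_inl h1
      rw [hf2] at h2
      obtain ⟨a3, hf3, r2⟩ := A_inr h2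
      rw [hf3] at h3
      have r3 : Ar g k a3 a0 := h3
      have h02 := Ea_cancel_right e0 e1 (r3.1.trans r2.1)
      obtain ⟨-, j2, hj2, hj2k, e2⟩ := Ar_spec r2
      obtain ⟨-, j3, hj3, hj3k, e3⟩ := Ar_spec r3
      rw [← h02] at e2
      exact M0 hk4 (t := a0.2) (J := j3 + j2) (by omega) (by omega)
        (by linear_combination e3 + (g : F) ^ j3 * e2)
  -- EEEE
  · rcases hf0 : f 0 with a0 | a0 <;> rw [hf0] at h0 h3
    · obtain ⟨a1, hf1, e0⟩ := E_inl h0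
      rw [hf1] at h1
      obtain ⟨a2, hf2, e1⟩ := E_inr h1
      rw [hf2] at h2
      obtain ⟨a3, hf3, e2⟩ := E_inl h2
      rw [hf3] at h3
      have e3 : Ea a0 a3 := h3
      rcases quad e0 e1 e3 e2 with hq | hq
      · exact hinj.ne (show (0 : ZMod 4) ≠ 2 by decide) (by rw [hf0, hf2, hq])
      · exact hinj.ne (show (1 : ZMod 4) ≠ 3 by decide) (by rw [hf1, hf3, hq])
    · obtain ⟨a1, hf1, e0⟩ := E_inr h0
      rw [hf1] at h1
      obtain ⟨a2, hf2, e1⟩ := E_inl h1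
      rw [hf2] at h2
      obtain ⟨a3, hf3, e2⟩ := E_inr h2
      rw [hf3] at h3
      have e3 : Ea a3 a0 := h3
      rcases quad e0 e3 e1 e2 with hq | hq
      · exact hinj.ne (show (1 : ZMod 4) ≠ 3 by decide) (by rw [hf1, hf3, hq])
      · exact hinj.ne (show (0 : ZMod 4) ≠ 2 by decide) (by rw [hf0, hf2, hq])


lemma girth_lb (hk4 : 4 * k < orderOf g) {l : ℕ} {f : ZMod l → V F}
    (hc : IsMixedCycleIn Eg (Ag g k) l f) : 5 ≤ l := by
  by_contra hlt
  push_neg at hlt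
  interval_cases l
  · haveI : Infinite (ZMod 0) := inferInstanceAs (Infinite ℤ)
    haveI := Finite.of_injective f hc.1
    exact not_finite (ZMod 0)
  · exact no1 hk4 hc
  · exact no2 hk4 hc
  · exact no3 hk4 hc
  · exact no4 hk4 hc

lemma exists5 (hk1 : 1 ≤ k) (hk4 : 4 * k < orderOf g) (h5 : 5 ≤ orderOf g) :
    ∃ f : ZMod 5 → V F, IsMixedCycleIn Eg (Ag g k) 5 f := by
  have hg1 : g ≠ 1 := by
    intro h
    rw [h, orderOf_one] at h5
    omega
  have hgF : (g : F) ≠ 1 := fun h => hg1 (Units.ext (by rw [h, Units.val_one]))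
  set v0 : V F := .inl (some 0, 1) with hv0
  set v1 : V F := .inl (some 0, g) with hv1
  set v2 : V F := .inr (some 1, -g) with hv2
  set v3 : V F := .inl (none, -g) with hv3
  set v4 : V F := .inr (some (g : F), -g) with hv4
  have h01 : v0 ≠ v1 := by
    rw [hv0, hv1]
    intro h
    have h2 := congrArg Prod.snd (Sum.inl.inj h)
    exact hg1 (h2.symm : g = 1)
  have h02 : v0 ≠ v2 := by rw [hv0, hv2]; exact fun h => Sum.inl_ne_inr h
  have h03 : v0 ≠ v3 := by
    rw [hv0, hv3]
    intro h
    have h1 := congrArg Prod.fst (Sum.inl.inj h)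
    exact Option.some_ne_none _ h1
  have h04 : v0 ≠ v4 := by rw [hv0, hv4]; exact fun h => Sum.inl_ne_inr h
  have h12 : v1 ≠ v2 := by rw [hv1, hv2]; exact fun h => Sum.inl_ne_inr h
  have h13 : v1 ≠ v3 := by
    rw [hv1, hv3]
    intro h
    have h1 := congrArg Prod.fst (Sum.inl.inj h)
    exact Option.some_ne_none _ h1
  have h14 : v1 ≠ v4 := by rw [hv1, hv4]; exact fun h => Sum.inl_ne_inr h
  have h23 : v2 ≠ v3 := by rw [hv2, hv3]; exact fun h => Sum.inr_ne_inl h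
  have h24 : v2 ≠ v4 := by
    rw [hv2, hv4]
    intro h
    have h1 := congrArg Prod.fst (Sum.inr.inj h)
    exact hgF (Option.some_injective _ (h1 : some 1 = some (g : F))).symm
  have h34 : v3 ≠ v4 := by rw [hv3, hv4]; exact fun h => Sum.inl_ne_inr h
  refine ⟨fun i => if i = 0 then v0 else if i = 1 then v1 else if i = 2 then v2
    else if i = 3 then v3 else v4, ?_, fun i => decide (i = 0), ?_, ?_⟩
  · have key : ∀ x y : ZMod 5, x ≠ y →
        (if x = 0 then v0 else if x = 1 then v1 else if x = 2 then v2 else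
          if x = 3 then v3 else v4) ≠
        (if y = 0 then v0 else if y = 1 then v1 else if y = 2 then v2 else
          if y = 3 then v3 else v4) := by
      intro x y hxy
      fin_cases x <;> fin_cases y <;> simp only [reduceIte] <;>
        first
          | exact absurd rfl hxy
          | assumption
          | exact Ne.symm (by assumption)
    intro a b hab
    by_contra hne
    exact key a b hne hab
  · intro t
    fin_cases t
    · have he : ((0 : ZMod 5) + 1) = 1 := by decide
      simp only [he, reduceIte]
      show Ar g k (some 0, 1) (some 0, g)
      exact ⟨rfl, 1, le_refl 1, hk1, by rw [pow_one, mul_one]⟩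
    · have he : ((1 : ZMod 5) + 1) = 2 := by decide
      simp only [he, reduceIte]
      show Ea (some 0, g) (some 1, -g)
      show ((-g : Fˣ) : F) = (g : F) * cc (some 0) (some 1)
      rw [Units.val_neg]
      show -(g : F) = (g : F) * ((0 : F) - 1)
      ring
    · have he : ((2 : ZMod 5) + 1) = 3 := by decide
      simp only [he, reduceIte]
      show Ea (none, -g) (some 1, -g)
      show ((-g : Fˣ) : F) = ((-g : Fˣ) : F) * cc none (some 1)
      show ((-g : Fˣ) : F) = ((-g : Fˣ) : F) * 1
      rw [mul_one]
    · have he : ((3 : ZMod 5) + 1) = 4 := by decide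
      simp only [he, reduceIte]
      show Ea (none, -g) (some (g : F), -g)
      show ((-g : Fˣ) : F) = ((-g : Fˣ) : F) * cc none (some (g : F))
      show ((-g : Fˣ) : F) = ((-g : Fˣ) : F) * 1
      rw [mul_one]
    · have he : ((4 : ZMod 5) + 1) = 0 := by decide
      simp only [he, reduceIte]
      show Ea (some 0, 1) (some (g : F), -g)
      show ((-g : Fˣ) : F) = ((1 : Fˣ) : F) * cc (some 0) (some (g : F))
      rw [Units.val_neg, Units.val_one]
      show -(g : F) = 1 * ((0 : F) - (g : F))
      ring
  · intro h
    omega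


end basic

end MixedCage

namespace MixedCage

section cnt2
variable {F : Type} [Field F] [Fintype F] {g : Fˣ} {k : ℕ}

lemma card_ne (d : Option F) : Nat.card {m : Option F // m ≠ d} = Fintype.card F := by
  classical
  rw [Nat.card_eq_fintype_card]
  simp only [ne_eq]
  rw [Fintype.card_subtype_compl, Fintype.card_subtype_eq, Fintype.card_option]
  omega

lemma Eg_card (v : V F) : Nat.card {w : V F // Eg v w} = Fintype.card F := by
  classical
  rcases v with ⟨d, t⟩ | ⟨m, b⟩
  · have hbij : Function.Bijective (fun m : {m : Option F // m ≠ d} =>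
        (⟨.inr (m.1, t * Units.mk0 (cc d m.1) (fun h => m.2 (cc_eq_zero.mp h).symm)),
          show Ea (d, t) _ from by
            show (↑(t * Units.mk0 (cc d m.1) _) : F) = (t : F) * cc d m.1
            rw [Units.val_mul, Units.val_mk0]⟩ :
          {w : V F // Eg (.inl (d, t)) w})) := by
      constructor
      · intro m m' h
        have h1 := congrArg Subtype.val h
        simp only at h1
        exact Subtype.ext (congrArg Prod.fst (Sum.inr.inj h1))
      · rintro ⟨w, hw⟩
        rcases w with a | ⟨m', b'⟩
        · exact hw.elim
        · have hw' : Ea (d, t) (m', b') := hw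
          have hcc : cc d m' ≠ 0 := Ea_cc_ne hw'
          refine ⟨⟨m', fun h => hcc (cc_eq_zero.mpr h.symm)⟩, ?_⟩
          apply Subtype.ext
          simp only
          refine congrArg Sum.inr (Prod.ext rfl (Units.ext ?_))
          rw [Units.val_mul, Units.val_mk0]
          exact hw'.symm
    rw [← Nat.card_eq_of_bijective _ hbij, card_ne]
  · have hbij : Function.Bijective (fun d' : {d' : Option F // d' ≠ m} =>
        (⟨.inl (d'.1, b * (Units.mk0 (cc d'.1 m) (fun h => d'.2 (cc_eq_zero.mp h)))⁻¹),
          show Ea (d'.1, _) (m, b) from by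
            show (b : F) = (↑(b * (Units.mk0 (cc d'.1 m) _)⁻¹) : F) * cc d'.1 m
            rw [Units.val_mul, Units.val_inv_eq_inv_val, Units.val_mk0]
            rw [inv_mul_cancel_right₀ (fun h => d'.2 (cc_eq_zero.mp h))]⟩ :
          {w : V F // Eg (.inr (m, b)) w})) := by
      constructor
      · intro x x' h
        have h1 := congrArg Subtype.val h
        simp only at h1
        exact Subtype.ext (congrArg Prod.fst (Sum.inl.inj h1))
      · rintro ⟨w, hw⟩
        rcases w with ⟨d', t'⟩ | a
        · have hw' : Ea (d', t') (m, b) := hw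
          have hcc : cc d' m ≠ 0 := Ea_cc_ne hw'
          refine ⟨⟨d', fun h => hcc (cc_eq_zero.mpr h)⟩, ?_⟩
          apply Subtype.ext
          simp only
          refine congrArg Sum.inl (Prod.ext rfl (Units.ext ?_))
          rw [Units.val_mul, Units.val_inv_eq_inv_val, Units.val_mk0,
            mul_inv_eq_iff_eq_mul₀ hcc]
          exact hw'
        · exact hw.elim
    rw [← Nat.card_eq_of_bijective _ hbij, card_ne]


lemma pow_inj (hk4 : 4 * k < orderOf g) {i j : ℕ} (hi : i ≤ 4 * k) (hj : j ≤ 4 * k)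
    (h : g ^ i = g ^ j) : i = j := by
  have hm := pow_eq_pow_iff_modEq.mp h
  exact Nat.ModEq.eq_of_lt_of_lt hm (by omega) (by omega)

lemma Ag_out (hk4 : 4 * k < orderOf g) (v : V F) :
    Nat.card {w : V F // Ag g k v w} = k := by
  classical
  rcases v with ⟨d, t⟩ | ⟨d, t⟩
  · have hbij : Function.Bijective (fun j : (Finset.Icc 1 k) =>
        (⟨.inl (d, g ^ (j : ℕ) * t),
          ⟨rfl, j, (Finset.mem_Icc.mp j.2).1, (Finset.mem_Icc.mp j.2).2, rfl⟩⟩ :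
          {w : V F // Ag g k (.inl (d, t)) w})) := by
      constructor
      · intro i j h
        have h1 := congrArg Subtype.val h
        simp only at h1
        have h3 := congrArg Prod.snd (Sum.inl.inj h1)
        simp only at h3
        have h4 : g ^ (i : ℕ) = g ^ (j : ℕ) := mul_right_cancel h3
        have hik := Finset.mem_Icc.mp i.2
        have hjk := Finset.mem_Icc.mp j.2
        exact Subtype.ext (pow_inj hk4 (by omega) (by omega) h4)
      · rintro ⟨w, hw⟩
        rcases w with ⟨d', t'⟩ | a
        · obtain ⟨hd, j, hj1, hjk, ht⟩ := (hw : Ar g k (d, t) (d', t'))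
          exact ⟨⟨j, Finset.mem_Icc.mpr ⟨hj1, hjk⟩⟩,
            Subtype.ext (congrArg Sum.inl (Prod.ext hd.symm ht.symm))⟩
        · exact hw.elim
    rw [← Nat.card_eq_of_bijective _ hbij, Nat.card_eq_fintype_card, Fintype.card_coe,
      Nat.card_Icc]
    omega
  · have hbij : Function.Bijective (fun j : (Finset.Icc 1 k) =>
        (⟨.inr (d, g ^ (j : ℕ) * t),
          ⟨rfl, j, (Finset.mem_Icc.mp j.2).1, (Finset.mem_Icc.mp j.2).2, rfl⟩⟩ :
          {w : V F // Ag g k (.inr (d, t)) w})) := by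
      constructor
      · intro i j h
        have h1 := congrArg Subtype.val h
        simp only at h1
        have h3 := congrArg Prod.snd (Sum.inr.inj h1)
        simp only at h3
        have h4 : g ^ (i : ℕ) = g ^ (j : ℕ) := mul_right_cancel h3
        have hik := Finset.mem_Icc.mp i.2
        have hjk := Finset.mem_Icc.mp j.2
        exact Subtype.ext (pow_inj hk4 (by omega) (by omega) h4)
      · rintro ⟨w, hw⟩
        rcases w with a | ⟨d', t'⟩
        · exact hw.elim
        · obtain ⟨hd, j, hj1, hjk, ht⟩ := (hw : Ar g k (d, t) (d', t'))
          exact ⟨⟨j, Finset.mem_Icc.mpr ⟨hj1, hjk⟩⟩,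
            Subtype.ext (congrArg Sum.inr (Prod.ext hd.symm ht.symm))⟩
    rw [← Nat.card_eq_of_bijective _ hbij, Nat.card_eq_fintype_card, Fintype.card_coe,
      Nat.card_Icc]
    omega

lemma Ag_in (hk4 : 4 * k < orderOf g) (v : V F) :
    Nat.card {w : V F // Ag g k w v} = k := by
  classical
  rcases v with ⟨d, t⟩ | ⟨d, t⟩
  · have hbij : Function.Bijective (fun j : (Finset.Icc 1 k) =>
        (⟨.inl (d, (g ^ (j : ℕ))⁻¹ * t),
          ⟨rfl, j, (Finset.mem_Icc.mp j.2).1, (Finset.mem_Icc.mp j.2).2,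
            (mul_inv_cancel_left _ _).symm⟩⟩ :
          {w : V F // Ag g k w (.inl (d, t))})) := by
      constructor
      · intro i j h
        have h1 := congrArg Subtype.val h
        simp only at h1
        have h3 := congrArg Prod.snd (Sum.inl.inj h1)
        simp only at h3
        have h4 : g ^ (i : ℕ) = g ^ (j : ℕ) := inv_injective (mul_right_cancel h3)
        have hik := Finset.mem_Icc.mp i.2
        have hjk := Finset.mem_Icc.mp j.2
        exact Subtype.ext (pow_inj hk4 (by omega) (by omega) h4)
      · rintro ⟨w, hw⟩
        rcases w with ⟨d', t'⟩ | a
        · obtain ⟨hd, j, hj1, hjk, ht⟩ := (hw : Ar g k (d', t') (d, t))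
          refine ⟨⟨j, Finset.mem_Icc.mpr ⟨hj1, hjk⟩⟩,
            Subtype.ext (congrArg Sum.inl (Prod.ext hd ?_))⟩
          show (g ^ j)⁻¹ * t = t'
          rw [show t = g ^ j * t' from ht, inv_mul_cancel_left]
        · exact hw.elim
    rw [← Nat.card_eq_of_bijective _ hbij, Nat.card_eq_fintype_card, Fintype.card_coe,
      Nat.card_Icc]
    omega
  · have hbij : Function.Bijective (fun j : (Finset.Icc 1 k) =>
        (⟨.inr (d, (g ^ (j : ℕ))⁻¹ * t),
          ⟨rfl, j, (Finset.mem_Icc.mp j.2).1, (Finset.mem_Icc.mp j.2).2,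
            (mul_inv_cancel_left _ _).symm⟩⟩ :
          {w : V F // Ag g k w (.inr (d, t))})) := by
      constructor
      · intro i j h
        have h1 := congrArg Subtype.val h
        simp only at h1
        have h3 := congrArg Prod.snd (Sum.inr.inj h1)
        simp only at h3
        have h4 : g ^ (i : ℕ) = g ^ (j : ℕ) := inv_injective (mul_right_cancel h3)
        have hik := Finset.mem_Icc.mp i.2
        have hjk := Finset.mem_Icc.mp j.2
        exact Subtype.ext (pow_inj hk4 (by omega) (by omega) h4)
      · rintro ⟨w, hw⟩
        rcases w with a | ⟨d', t'⟩
        · exact hw.elim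
        · obtain ⟨hd, j, hj1, hjk, ht⟩ := (hw : Ar g k (d', t') (d, t))
          refine ⟨⟨j, Finset.mem_Icc.mpr ⟨hj1, hjk⟩⟩,
            Subtype.ext (congrArg Sum.inr (Prod.ext hd ?_))⟩
          show (g ^ j)⁻¹ * t = t'
          rw [show t = g ^ j * t' from ht, inv_mul_cancel_left]
    rw [← Nat.card_eq_of_bijective _ hbij, Nat.card_eq_fintype_card, Fintype.card_coe,
      Nat.card_Icc]
    omega

lemma Eg_symm {v w : V F} (h : Eg v w) : Eg w v := by
  cases v <;> cases w
  · exact h.elim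
  · exact h
  · exact h
  · exact h.elim

lemma Eg_irrefl (v : V F) : ¬ Eg v v := by
  cases v <;> exact fun h => h

lemma Ag_irrefl (hk4 : 4 * k < orderOf g) (v : V F) : ¬ Ag g k v v := by
  have key : ∀ a : X F, ¬ Ar g k a a := by
    rintro a ⟨-, j, hj1, hjk, ht⟩
    exact pow_ne hk4 hj1 (by omega) (right_eq_mul.mp ht)
  cases v
  · exact key _
  · exact key _


end cnt2

section mainsec
variable {F : Type} [Field F] [Fintype F]

theorem main_mem (g : Fˣ) (k : ℕ) (hgen : ∀ x : Fˣ, x ∈ Subgroup.zpowers g)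
    (hk1 : 1 ≤ k) (hk4 : 4 * k + 1 ≤ Fintype.card F - 1) (h5 : 5 ≤ Fintype.card F - 1) :
    (2 * Fintype.card F ^ 2 - 2) ∈ MixedGraphOrders k (Fintype.card F) 5 := by
  classical
  have hord : orderOf g = Fintype.card F - 1 := by
    rw [orderOf_eq_card_of_forall_mem_zpowers hgen, Nat.card_eq_fintype_card, Fintype.card_units]
  have hk4' : 4 * k < orderOf g := by omega
  have h5' : 5 ≤ orderOf g := by omega
  have hq1 : 1 ≤ Fintype.card F := Fintype.card_pos
  have key : ∀ q : ℕ, 1 ≤ q → (q + 1) * (q - 1) + (q + 1) * (q - 1) = 2 * q ^ 2 - 2 := by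
    intro q hq
    obtain ⟨m, rfl⟩ := Nat.exists_eq_add_of_le hq
    have h1 : (1 + m) ^ 2 = m * m + 2 * m + 1 := by ring
    have h2 : (1 + m + 1) * (1 + m - 1) = m * m + 2 * m := by
      rw [show 1 + m - 1 = m from by omega]
      ring
    omega
  have hVcard : Fintype.card (V F) = 2 * Fintype.card F ^ 2 - 2 := by
    rw [Fintype.card_sum, Fintype.card_prod, Fintype.card_option, Fintype.card_units]
    exact key _ hq1
  let e : V F ≃ Fin (2 * Fintype.card F ^ 2 - 2) := Fintype.equivFinOfCardEq hVcard
  refine ⟨fun a b => Eg (e.symm a) (e.symm b), fun a b => Ag g k (e.symm a) (e.symm b),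
    fun u v h => Eg_symm h, fun v => Eg_irrefl _, fun v => Ag_irrefl hk4' _,
    fun u v h => EA_disj h.1 h.2, ?_, ?_, ?_, ?_, ?_⟩
  · intro v
    exact (Nat.card_congr (Equiv.subtypeEquiv e.symm (fun w => Iff.rfl))).trans (Eg_card _)
  · intro v
    exact (Nat.card_congr (Equiv.subtypeEquiv e.symm (fun w => Iff.rfl))).trans (Ag_out hk4' _)
  · intro v
    exact (Nat.card_congr (Equiv.subtypeEquiv e.symm (fun w => Iff.rfl))).trans (Ag_in hk4' _)
  · intro l f hf
    exact girth_lb hk4' (f := e.symm ∘ f) ⟨e.symm.injective.comp hf.1, hf.2⟩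
  · obtain ⟨f, hf⟩ := exists5 hk1 hk4' h5'
    refine ⟨e ∘ f, e.injective.comp hf.1, ?_⟩
    obtain ⟨s, hstep, -⟩ := hf.2
    refine ⟨s, fun t => ?_, fun h => by omega⟩
    have h := hstep t
    by_cases hst : s t = true
    · rw [hst, if_pos rfl] at h ⊢
      show Ag g k (e.symm (e (f t))) (e.symm (e (f (t + 1))))
      rw [Equiv.symm_apply_apply, Equiv.symm_apply_apply]
      exact h
    · have hst' : s t = false := by simpa using hst
      rw [hst'] at h ⊢
      rw [if_neg (by simp)] at h ⊢
      show Eg (e.symm (e (f t))) (e.symm (e (f (t + 1))))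
      rw [Equiv.symm_apply_apply, Equiv.symm_apply_apply]
      exact h

end mainsec

end MixedCage

/-- For every prime power `q` with `q - 1 = 4k + R`, `R ∈ {1,…,5}`, `k ≥ 1`, there is a
`[k,q;5]`-mixed graph on `2q² - 2` vertices, hence `n[k,q;5] ≤ 2q² - 2`. -/
theorem mixed_cage_upper_bound (q k R : ℕ) (hq : IsPrimePow q)
    (hk : 1 ≤ k) (hR1 : 1 ≤ R) (hR5 : R ≤ 5) (hqk : q - 1 = 4 * k + R) :
    (2 * q ^ 2 - 2) ∈ MixedGraphOrders k q 5 ∧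
      sInf (MixedGraphOrders k q 5) ≤ 2 * q ^ 2 - 2 := by
  obtain ⟨p, n, hp, hn, rfl⟩ := hq
  haveI := Fact.mk (Nat.prime_iff.mpr hp)
  have hq2 : 2 ≤ p ^ n := (Nat.prime_iff.mpr hp).two_le.trans (Nat.le_self_pow hn.ne' p)
  haveI : Fintype (GaloisField p n) := Fintype.ofFinite _
  have hcard : Fintype.card (GaloisField p n) = p ^ n := by
    rw [← Nat.card_eq_fintype_card]
    exact GaloisField.card p n hn.ne'
  obtain ⟨g, hg⟩ := IsCyclic.exists_generator (α := (GaloisField p n)ˣ)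
  have hmem := MixedCage.main_mem (F := GaloisField p n) g k hg hk
    (by rw [hcard]; omega) (by rw [hcard]; omega)
  rw [hcard] at hmem
  exact ⟨hmem, Nat.sInf_le hmem⟩
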